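/- Let 𝒳, 𝒳' ⊆ Φ be almost parabolic sets with R_𝒳 = R_𝒳'. Then every root of 𝒯 = 𝒳 ∖ 𝒳' is orthogonal to every root of 𝒱 = 𝒳 ∩ 𝒳': ⟨β,γ⟩ = 0 for all β ∈ 𝒯 and γ ∈ 𝒱. -/

import Mathlib

/-!
Context: `(W, S)` is a Coxeter system for the Coxeter matrix `M` (Mathlib's convention:
the entry `0` encodes `∞`).  `V = ⊕_{s ∈ S} ℝ·α_s` is realized as `S →₀ ℝ` with
`α_s = simpleRoot s`, equipped with the canonical symmetric bilinear form `bform M`.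
The canonical faithful form-preserving representation `ρ : W →* GL(V)` and the map
`β ↦ r_β` assigning to each root its reflection are given as data, characterized by
the usual formulas (`hρ`, `hρinj`, `hρform`, `hr` below).
-/

noncomputable section

open scoped Real Pointwise

variable {S W : Type*}

/-- The simple root `α_s`. -/
def simpleRoot (s : S) : S →₀ ℝ := Finsupp.single s 1

/-- The entry `⟨α_s, α_t⟩ = -cos (π / m_{s,t})` of the canonical bilinear form,
interpreted as `-1` when `m_{s,t} = ∞` (encoded by `0`). -/
def formEntry (M : CoxeterMatrix S) (s t : S) : ℝ :=
  if M s t = 0 then -1 else -Real.cos (Real.pi / (M s t : ℝ))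

/-- The canonical symmetric bilinear form on `V = ⊕_{s ∈ S} ℝ·α_s`. -/
def bform (M : CoxeterMatrix S) : (S →₀ ℝ) →ₗ[ℝ] (S →₀ ℝ) →ₗ[ℝ] ℝ :=
  Finsupp.basisSingleOne.constr ℝ fun s =>
    Finsupp.basisSingleOne.constr ℝ fun t => formEntry M s t

variable [Group W]

/-- The root system `Φ = { w (α_s) : w ∈ W, s ∈ S }`. -/
def rootSystem (ρ : W →* ((S →₀ ℝ) ≃ₗ[ℝ] (S →₀ ℝ))) : Set (S →₀ ℝ) :=
  Set.range fun p : W × S => ρ p.1 (simpleRoot p.2)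

/-- A subset `𝒳 ⊆ V` is almost parabolic (AP): (AP1) the vectors of `𝒳` are linearly
independent, and (AP2) any two elements of `𝒳` are of the form `w (α_s)`, `w (α_t)` for a
common `w ∈ W`. -/
def IsAP (ρ : W →* ((S →₀ ℝ) ≃ₗ[ℝ] (S →₀ ℝ))) (𝒳 : Set (S →₀ ℝ)) : Prop :=
  LinearIndependent ℝ ((↑) : 𝒳 → (S →₀ ℝ)) ∧
    ∀ β ∈ 𝒳, ∀ γ ∈ 𝒳, ∃ (w : W) (s t : S),
      ρ w (simpleRoot s) = β ∧ ρ w (simpleRoot t) = γ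

/-- `g ∈ W` is a product of `n` elements of `T`. -/
def HasLen (T : Set W) (g : W) (n : ℕ) : Prop :=
  ∃ l : List W, (∀ x ∈ l, x ∈ T) ∧ l.prod = g ∧ l.length = n

/-- `u` has minimal word length (w.r.t. the generating set `T`) in the coset `u·H`. -/
def MinimalInCoset (T : Set W) (H : Subgroup W) (u : W) : Prop :=
  ∀ h ∈ H, ∀ m, HasLen T (u * h) m → ∃ n ≤ m, HasLen T u n

lemma bform_simple (M : CoxeterMatrix S) (s t : S) :
    bform M (simpleRoot s) (simpleRoot t) = formEntry M s t := by
  have h : ∀ u : S, simpleRoot u = Finsupp.basisSingleOne u := by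
    intro u; simp [simpleRoot]
  rw [h, h, bform, Module.Basis.constr_basis, Module.Basis.constr_basis]

lemma formEntry_self (M : CoxeterMatrix S) (s : S) : formEntry M s s = 1 := by
  simp [formEntry, M.diagonal s]

lemma formEntry_nonpos (M : CoxeterMatrix S) {s t : S} (h : s ≠ t) :
    formEntry M s t ≤ 0 := by
  unfold formEntry
  split_ifs with h0
  · norm_num
  · have h1 : M s t ≠ 1 := M.off_diagonal s t h
    have h2 : 2 ≤ M s t := by omega
    have h2' : (2 : ℝ) ≤ (M s t : ℝ) := by exact_mod_cast h2
    have hc : 0 ≤ Real.cos (Real.pi / (M s t : ℝ)) := by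
      apply Real.cos_nonneg_of_mem_Icc
      constructor
      · have : 0 ≤ Real.pi / (M s t : ℝ) := div_nonneg Real.pi_pos.le (by linarith)
        linarith [Real.pi_pos]
      · exact div_le_div_of_nonneg_left Real.pi_pos.le (by norm_num) h2'
    linarith

/-- Let `𝒳, 𝒳' ⊆ Φ` be almost parabolic with `R_𝒳 = R_𝒳'`.  Then every
root of `𝒯 = 𝒳 ∖ 𝒳'` is orthogonal to every root of `𝒱 = 𝒳 ∩ 𝒳'`. -/
theorem statement7
    (M : CoxeterMatrix S) (cs : CoxeterSystem M W)
    (ρ : W →* ((S →₀ ℝ) ≃ₗ[ℝ] (S →₀ ℝ)))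
    (hρ : ∀ (s : S) (v : S →₀ ℝ),
      ρ (cs.simple s) v = v - (2 * bform M (simpleRoot s) v) • simpleRoot s)
    (hρinj : Function.Injective ρ)
    (hρform : ∀ (w : W) (x y : S →₀ ℝ), bform M (ρ w x) (ρ w y) = bform M x y)
    (r : (S →₀ ℝ) → W)
    (hr : ∀ (w : W) (s : S), r (ρ w (simpleRoot s)) = w * cs.simple s * w⁻¹)
    (𝒳 𝒳' : Set (S →₀ ℝ)) (h𝒳Φ : 𝒳 ⊆ rootSystem ρ) (h𝒳'Φ : 𝒳' ⊆ rootSystem ρ)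
    (hAP : IsAP ρ 𝒳) (hAP' : IsAP ρ 𝒳')
    (hR : r '' 𝒳 = r '' 𝒳') :
    ∀ β ∈ 𝒳 \ 𝒳', ∀ γ ∈ 𝒳 ∩ 𝒳', bform M β γ = 0 := by
  have hcancel : ∀ (w : W) (v : S →₀ ℝ), ρ w (ρ w⁻¹ v) = v := by
    intro w v
    have : (ρ w) ((ρ w⁻¹) v) = (ρ w * ρ w⁻¹) v := rfl
    rw [this, ← map_mul, mul_inv_cancel, map_one]; rfl
  have key : ∀ β ∈ rootSystem ρ, ∀ v, ρ (r β) v = v - (2 * bform M β v) • β := by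
    rintro β ⟨⟨w, s⟩, rfl⟩ v
    rw [hr]
    have e1 : ρ (w * cs.simple s * w⁻¹) v = ρ w (ρ (cs.simple s) (ρ w⁻¹ v)) := by
      simp [map_mul]
    rw [e1, hρ]
    have e2 : bform M (simpleRoot s) ((ρ w⁻¹) v)
        = bform M (ρ w (simpleRoot s)) v := by
      conv_rhs => rw [← hcancel w v, hρform]
    rw [map_sub, map_smul, hcancel, e2]
  have norm1 : ∀ β ∈ rootSystem ρ, bform M β β = 1 := by
    rintro β ⟨⟨w, s⟩, rfl⟩
    rw [hρform, bform_simple, formEntry_self]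
  classical
  rintro β ⟨hβX, hβX'⟩ γ ⟨hγX, hγX'⟩
  have hββ : bform M β β = 1 := norm1 β (h𝒳Φ hβX)
  have hβ0 : β ≠ 0 := by
    intro h; rw [h] at hββ; simp at hββ
  -- find β' ∈ 𝒳' with same reflection
  obtain ⟨β', hβ'X', hrβ'⟩ : ∃ β' ∈ 𝒳', r β' = r β := by
    have : r β ∈ r '' 𝒳' := hR ▸ Set.mem_image_of_mem r hβX
    obtain ⟨β', h1, h2⟩ := this
    exact ⟨β', h1, h2⟩
  have hβ'β' : bform M β' β' = 1 := norm1 β' (h𝒳'Φ hβ'X')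
  set c : ℝ := bform M β β' with hc
  have heq : β' - (2 * c) • β = β' - (2 * bform M β' β') • β' := by
    rw [← key β (h𝒳Φ hβX) β', ← key β' (h𝒳'Φ hβ'X') β', hrβ']
  have h2s : (2:ℝ) • (c • β) = (2:ℝ) • β' := by
    have h2 := sub_right_injective heq
    rw [hβ'β'] at h2
    rw [smul_smul]
    rw [h2]
    norm_num
  have hβ'eq : β' = c • β := (smul_right_injective (S →₀ ℝ) (two_ne_zero (α := ℝ)) h2s).symm
  have hcc : c * c = 1 := by
    have h3 := hβ'β'
    rw [hβ'eq] at h3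
    simp only [map_smul, LinearMap.smul_apply, smul_eq_mul] at h3
    rw [hββ, mul_one] at h3
    exact h3
  -- the pair lemma: 𝒳 cannot contain both β and -β
  have hnot : -β ∉ 𝒳 := by
    intro hm
    have hne : (⟨β, hβX⟩ : 𝒳) ≠ ⟨-β, hm⟩ := by
      intro h
      have hv := congrArg Subtype.val h
      simp only at hv
      apply hβ0
      have h20 : (2:ℝ) • β = 0 := by
        rw [two_smul]
        nth_rewrite 2 [hv]
        exact add_neg_cancel β
      rcases smul_eq_zero.mp h20 with h' | h'
      · norm_num at h'
      · exact h'
    have hli := linearIndependent_iff'.mp hAP.1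
      {(⟨β, hβX⟩ : 𝒳), ⟨-β, hm⟩} (fun _ => (1:ℝ)) ?_ ⟨β, hβX⟩ (Finset.mem_insert_self _ _)
    · exact one_ne_zero hli
    · rw [Finset.sum_pair hne]
      simp
  have hmβ : -β ∈ 𝒳' := by
    rcases mul_self_eq_one_iff.mp hcc with h1 | h1
    · exfalso; apply hβX'
      rw [hβ'eq, h1, one_smul] at hβ'X'
      exact hβ'X'
    · rw [hβ'eq, h1, neg_one_smul] at hβ'X'
      exact hβ'X'
  -- first inequality: from 𝒳
  have hβγ : β ≠ γ := fun h => hβX' (h ▸ hγX')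
  obtain ⟨w, s, t, hs, ht⟩ := hAP.2 β hβX γ hγX
  have hst : s ≠ t := fun h => hβγ (by rw [← hs, ← ht, h])
  have le1 : bform M β γ ≤ 0 := by
    rw [← hs, ← ht, hρform, bform_simple]
    exact formEntry_nonpos M hst
  -- second inequality: from 𝒳'
  have hne2 : -β ≠ γ := by
    intro h
    exact hnot (h ▸ hγX)
  obtain ⟨w', s', t', hs', ht'⟩ := hAP'.2 (-β) hmβ γ hγX'
  have hst' : s' ≠ t' := fun h => hne2 (by rw [← hs', ← ht', h])
  have le2 : bform M (-β) γ ≤ 0 := by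
    rw [← hs', ← ht', hρform, bform_simple]
    exact formEntry_nonpos M hst'
  have le2' : -(bform M β γ) ≤ 0 := by
    simpa using le2
  linarith
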